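/- arXiv:math/0509021 — 5 statements merged into one kernel-verified Lean document; each statement's English description precedes it below -/
import Mathlib

section
/- For c ∈ (0,1), with a(c) = (1−√c)² and b(c) = (1+√c)², the integral ∫_{a(c)}^{b(c)} (log x)/(2πx) · √((x−a(c))(b(c)−x)) dx equals (c−1)log(1−c) − c. -/
open Real

open Metric in
set_option maxHeartbeats 1000000 in
private lemma mp_circle_integral (r : ℝ) (hr0 : 0 < r) (hr1 : r < 1) :
    ∫ φ in (0:ℝ)..(2*π),
        Real.log (1 + r^2 - 2*r*Real.cos φ) * Real.sin φ ^ 2 / (1 + r^2 - 2*r*Real.cos φ)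
      = -π - π*(1-r^2)*Real.log (1-r^2)/r^2 := by
  have hrne : (r:ℂ) ≠ 0 := by exact_mod_cast hr0.ne'
  have h1r : (1:ℝ) < 1/r := (one_lt_div hr0).mpr hr1
  -- the analytic numerator function
  set N : ℂ → ℂ := fun z => -(Complex.log (1 - r*z) * (z^2-1)^2) / (4*(1 - r*z)) with hN
  have hslit : ∀ z : ℂ, ‖z‖ < 1/r → 1 - (r:ℂ)*z ∈ Complex.slitPlane := by
    intro z hz
    left
    have h1 : |z.re| ≤ ‖z‖ := by exact Complex.abs_re_le_norm z
    have h2 : (1 - (r:ℂ)*z).re = 1 - r * z.re := by simp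
    rw [h2]
    have : r * z.re < 1 := by
      calc r * z.re ≤ r * |z.re| := by nlinarith [le_abs_self z.re]
      _ < r * (1/r) := by exact mul_lt_mul_of_pos_left (lt_of_le_of_lt h1 hz) hr0
      _ = 1 := by field_simp
    linarith
  have hdenne : ∀ z : ℂ, ‖z‖ < 1/r → 1 - (r:ℂ)*z ≠ 0 :=
    fun z hz => Complex.slitPlane_ne_zero (hslit z hz)
  have hNd : DifferentiableOn ℂ N (ball (0:ℂ) (1/r)) := by
    intro z hz
    rw [mem_ball_zero_iff] at hz
    apply DifferentiableAt.differentiableWithinAt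
    have hu : DifferentiableAt ℂ (fun w : ℂ => 1 - (r:ℂ)*w) z := by fun_prop
    exact (((hu.clog (hslit z hz)).mul (by fun_prop)).neg.div (by fun_prop) (by
      simpa using hdenne z hz))
  have hN0 : N 0 = 0 := by simp [hN]
  have hNderiv : HasDerivAt N ((r:ℂ)/4) 0 := by
    have hu : HasDerivAt (fun w : ℂ => 1 - (r:ℂ)*w) (-r) 0 := by
      simpa using ((hasDerivAt_id (0:ℂ)).const_mul (r:ℂ)).const_sub 1
    have hL : HasDerivAt (fun w : ℂ => Complex.log (1 - r*w)) (-r) 0 := by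
      have := hu.clog (by simp [Complex.one_mem_slitPlane])
      simpa using this
    have hP : HasDerivAt (fun w : ℂ => ((w:ℂ)^2-1)^2) 0 0 := by
      have := (((hasDerivAt_pow 2 (0:ℂ)).sub_const 1).pow 2)
      exact (by simpa using this : HasDerivAt ((fun x : ℂ => x^2-1)^2) 0 0)
    have hnum : HasDerivAt (fun w : ℂ => -(Complex.log (1 - r*w) * ((w:ℂ)^2-1)^2)) (r:ℂ) 0 := by
      have h := (hL.fun_mul hP).fun_neg
      norm_num [Complex.log_one] at h
      convert h using 1
    have hdenD : HasDerivAt (fun w : ℂ => 4*(1 - (r:ℂ)*w)) (4*(-r)) 0 := hu.const_mul 4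
    have hdiv := hnum.fun_div hdenD (by norm_num)
    norm_num [Complex.log_one] at hdiv
    refine hdiv.congr_deriv ?_
    ring
  have hDd : DifferentiableOn ℂ (dslope N 0) (ball (0:ℂ) (1/r)) :=
    (Complex.differentiableOn_dslope (ball_mem_nhds 0 (by positivity))).mpr hNd
  have hds0 : dslope N 0 0 = ((r:ℂ)/4) := by
    rw [dslope_same]; exact hNderiv.deriv
  have hsub : closedBall (0:ℂ) 1 ⊆ ball (0:ℂ) (1/r) := by
    intro z hz
    rw [mem_closedBall_zero_iff] at hz
    rw [mem_ball_zero_iff]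
    linarith
  have hmemr : (r:ℂ) ∈ ball (0:ℂ) 1 := by
    rw [mem_ball_zero_iff, Complex.norm_real, Real.norm_eq_abs, abs_of_pos hr0]; exact hr1
  have hmem0 : (0:ℂ) ∈ ball (0:ℂ) 1 := by simp
  -- Cauchy integral formulas
  have hc1 : (∮ z in C(0, 1), (z - 0)⁻¹ • N z) = (2 * π * Complex.I : ℂ) • N 0 :=
    DifferentiableOn.circleIntegral_sub_inv_smul (hNd.mono hsub) hmem0
  have hc2 : (∮ z in C(0, 1), (z - 0)⁻¹ • dslope N 0 z) = (2 * π * Complex.I : ℂ) • dslope N 0 0 :=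
    DifferentiableOn.circleIntegral_sub_inv_smul (hDd.mono hsub) hmem0
  have hc3 : (∮ z in C(0, 1), (z - (r:ℂ))⁻¹ • N z) = (2 * π * Complex.I : ℂ) • N r :=
    DifferentiableOn.circleIntegral_sub_inv_smul (hNd.mono hsub) hmemr
  -- value of N at r
  have h1c : (0:ℝ) < 1 - r^2 := by nlinarith
  have hNr : N r = ((-(Real.log (1-r^2) * (1-r^2))/4 : ℝ) : ℂ) := by
    have hlog := Complex.ofReal_log h1c.le
    rw [hN]
    simp only
    rw [show (1 - (r:ℂ)*(r:ℂ)) = ((1-r^2:ℝ):ℂ) by push_cast; ring, ← hlog]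
    have h4 : (4:ℂ)*((1-r^2:ℝ):ℂ) ≠ 0 := by
      have h0 : ((1-r^2:ℝ):ℂ) ≠ 0 := by exact_mod_cast h1c.ne'
      push_cast at h0 ⊢
      exact mul_ne_zero (by norm_num) h0
    rw [div_eq_iff h4]
    push_cast
    ring
  -- the combined function on the circle
  set Q : ℂ → ℂ := fun z => (-(1/(r:ℂ)^2)) • ((z - 0)⁻¹ • N z)
      + (-(1/(r:ℂ))) • ((z - 0)⁻¹ • dslope N 0 z)
      + ((1/(r:ℂ)^2)) • ((z - (r:ℂ))⁻¹ • N z) with hQ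
  -- pointwise identity on the circle
  have key : ∀ θ : ℝ,
      Real.log (1 + r^2 - 2*r*Real.cos θ) * Real.sin θ ^ 2 / (1 + r^2 - 2*r*Real.cos θ)
      = 2 * ((circleMap 0 1 θ * Complex.I) • Q (circleMap 0 1 θ)).im := by
    intro θ
    set z := circleMap 0 1 θ with hzdef0
    set cs := Real.cos θ with hcs
    set sn := Real.sin θ with hsn
    have hzdef : z = (cs : ℂ) + (sn : ℂ) * Complex.I := by
      rw [hzdef0, circleMap]
      simp [Complex.exp_mul_I, ← Complex.ofReal_cos, ← Complex.ofReal_sin]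
      rfl
    set x := 1 + r^2 - 2*r*cs with hx
    have pythR : sn^2 + cs^2 = 1 := by
      rw [hsn, hcs]; exact Real.sin_sq_add_cos_sq θ
    have pythC : (sn:ℂ)^2 + (cs:ℂ)^2 = 1 := by exact_mod_cast pythR
    have hcs1 : cs ≤ 1 := Real.cos_le_one θ
    have hx0 : 0 < x := by nlinarith [sq_nonneg (1-r)]
    have hxC : ((x:ℝ):ℂ) ≠ 0 := by exact_mod_cast hx0.ne'
    have hzne : z ≠ 0 := circleMap_ne_center one_ne_zero
    have hzr : z - (r:ℂ) ≠ 0 := sub_ne_zero.mpr (circleMap_ne_mem_ball hmemr θ)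
    have hznorm : ‖z‖ < 1/r := by
      rw [hzdef0, norm_circleMap_zero]; simpa using h1r
    have h1rz : 1 - (r:ℂ)*z ≠ 0 := hdenne z hznorm
    set L := Complex.log (1 - (r:ℂ)*z) with hLdef
    have g1 : ((x:ℝ):ℂ)*z = (1 - (r:ℂ)*z)*(z - (r:ℂ)) := by
      rw [hzdef, hx]
      push_cast
      linear_combination ((r:ℂ)*(sn:ℂ)^2)*Complex.I_sq + (-(r:ℂ))*pythC
    have g2 : z^2 - 1 = 2*(sn:ℂ)*Complex.I*z := by
      rw [hzdef]
      linear_combination (-(sn:ℂ)^2)*Complex.I_sq + pythC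
    have g2sq : (z^2-1)^2 = -4*(sn:ℂ)^2*z^2 := by
      linear_combination (z^2 - 1 + 2*(sn:ℂ)*Complex.I*z)*g2 + (4*(sn:ℂ)^2*z^2)*Complex.I_sq
    have hNz : N z = (sn:ℂ)^2*z^2*L/(1 - (r:ℂ)*z) := by
      rw [hN]
      simp only
      rw [g2sq, ← hLdef]
      field_simp
    have hdsz : dslope N 0 z = N z / z := by
      rw [dslope_of_ne N hzne, slope_def_field, hN0, sub_zero, sub_zero]
    have hmul : (1 - (r:ℂ)*z)*(z^2*(z - (r:ℂ))) ≠ 0 :=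
      mul_ne_zero h1rz (mul_ne_zero (pow_ne_zero 2 hzne) hzr)
    have pf : ∀ w : ℂ, -(1/(r:ℂ)^2)*(z⁻¹*w) + (-(1/(r:ℂ)))*(z⁻¹*(w/z))
        + (1/(r:ℂ)^2)*((z-(r:ℂ))⁻¹*w) = w/(z^2*(z-(r:ℂ))) := by
      intro w
      have hpoly : (r:ℂ)^5*z^4 - (r:ℂ)^6*z^3 ≠ 0 := by
        rw [show (r:ℂ)^5*z^4 - (r:ℂ)^6*z^3 = (r:ℂ)^5*z^3*(z-(r:ℂ)) by ring]
        exact mul_ne_zero (mul_ne_zero (pow_ne_zero _ hrne) (pow_ne_zero _ hzne)) hzr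
      rw [eq_div_iff (mul_ne_zero (pow_ne_zero 2 hzne) hzr)]
      field_simp
      ring
    have hA2 : Q z = N z/(z^2*(z - (r:ℂ))) := by
      rw [hQ]
      simp only [smul_eq_mul, sub_zero]
      rw [hdsz]
      exact pf (N z)
    have hQz : (z * Complex.I) • Q z = Complex.I * L * (sn:ℂ)^2 / ((x:ℝ):ℂ) := by
      rw [smul_eq_mul, hA2, hNz, div_div, ← mul_div_assoc, div_eq_div_iff hmul hxC]
      linear_combination (Complex.I * L * (sn:ℂ)^2 * z^2) * g1
    rw [hQz]
    -- compute the imaginary part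
    have habs : ‖1 - (r:ℂ)*z‖ ^ 2 = x := by
      rw [Complex.sq_norm, hzdef]
      simp [Complex.normSq_apply]
      ring_nf
      nlinarith [pythR]
    have hre : L.re = Real.log x / 2 := by
      rw [hLdef, Complex.log_re, ← Real.log_sqrt hx0.le]
      congr 1
      rw [← Real.sqrt_sq (norm_nonneg (1 - (r:ℂ)*z)), habs]
    have him : (Complex.I * L * (sn:ℂ)^2 / ((x:ℝ):ℂ)).im = sn^2/x * L.re := by
      have : Complex.I * L * (sn:ℂ)^2 / ((x:ℝ):ℂ) = ((sn^2/x : ℝ) : ℂ) * (L * Complex.I) := by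
        push_cast; field_simp
      rw [this, Complex.im_ofReal_mul, Complex.mul_I_im]
    rw [him, hre]
    field_simp
  -- continuity facts
  have hmaps : ∀ θ : ℝ, circleMap 0 1 θ ∈ ball (0:ℂ) (1/r) := by
    intro θ
    rw [mem_ball_zero_iff, norm_circleMap_zero]
    simpa using h1r
  have hNcont : Continuous fun θ => N (circleMap 0 1 θ) :=
    hNd.continuousOn.comp_continuous (continuous_circleMap 0 1) hmaps
  have hDcont : Continuous fun θ => dslope N 0 (circleMap 0 1 θ) :=
    hDd.continuousOn.comp_continuous (continuous_circleMap 0 1) hmaps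
  have hinv0 : Continuous fun θ => (circleMap 0 1 θ - 0)⁻¹ := continuous_circleMap_inv hmem0
  have hinvr : Continuous fun θ => (circleMap 0 1 θ - (r:ℂ))⁻¹ := continuous_circleMap_inv hmemr
  have hQc : Continuous fun θ => Q (circleMap 0 1 θ) := by
    simp only [hQ]
    exact (((hinv0.fun_smul hNcont).fun_const_smul _).fun_add ((hinv0.fun_smul hDcont).fun_const_smul _)).fun_add
      ((hinvr.fun_smul hNcont).fun_const_smul _)
  have hGc : Continuous fun θ => (circleMap 0 1 θ * Complex.I) • Q (circleMap 0 1 θ) :=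
    ((continuous_circleMap 0 1).mul continuous_const).smul hQc
  have hGint : IntervalIntegrable (fun θ => (circleMap 0 1 θ * Complex.I) • Q (circleMap 0 1 θ))
      MeasureTheory.volume 0 (2*π) := hGc.intervalIntegrable _ _
  -- each circle integral piece as an interval integral
  have epiece : ∀ f : ℂ → ℂ, (∀ θ:ℝ, True) →
      (∫ θ in (0:ℝ)..2*π, (circleMap 0 1 θ * Complex.I) • f (circleMap 0 1 θ))
        = ∮ z in C(0, 1), f z := by
    intro f _
    rw [circleIntegral]
    apply intervalIntegral.integral_congr
    intro θ _
    simp [deriv_circleMap]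
  -- split the integral
  have i1 : IntervalIntegrable (fun θ => (-(1/(r:ℂ)^2)) • ((circleMap 0 1 θ * Complex.I) •
      ((circleMap 0 1 θ - 0)⁻¹ • N (circleMap 0 1 θ)))) MeasureTheory.volume 0 (2*π) :=
    (((((continuous_circleMap 0 1).fun_mul continuous_const).fun_smul (hinv0.fun_smul hNcont)).fun_const_smul _).intervalIntegrable _ _)
  have i2 : IntervalIntegrable (fun θ => (-(1/(r:ℂ))) • ((circleMap 0 1 θ * Complex.I) •
      ((circleMap 0 1 θ - 0)⁻¹ • dslope N 0 (circleMap 0 1 θ)))) MeasureTheory.volume 0 (2*π) :=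
    (((((continuous_circleMap 0 1).fun_mul continuous_const).fun_smul (hinv0.fun_smul hDcont)).fun_const_smul _).intervalIntegrable _ _)
  have i3 : IntervalIntegrable (fun θ => ((1/(r:ℂ)^2)) • ((circleMap 0 1 θ * Complex.I) •
      ((circleMap 0 1 θ - (r:ℂ))⁻¹ • N (circleMap 0 1 θ)))) MeasureTheory.volume 0 (2*π) :=
    (((((continuous_circleMap 0 1).fun_mul continuous_const).fun_smul (hinvr.fun_smul hNcont)).fun_const_smul _).intervalIntegrable _ _)
  have hsplit : (∫ θ in (0:ℝ)..2*π, (circleMap 0 1 θ * Complex.I) • Q (circleMap 0 1 θ))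
      = (-(1/(r:ℂ)^2)) • (∮ z in C(0, 1), (z - 0)⁻¹ • N z)
        + (-(1/(r:ℂ))) • (∮ z in C(0, 1), (z - 0)⁻¹ • dslope N 0 z)
        + ((1/(r:ℂ)^2)) • (∮ z in C(0, 1), (z - (r:ℂ))⁻¹ • N z) := by
    rw [← epiece _ (fun _ => trivial), ← epiece _ (fun _ => trivial), ← epiece _ (fun _ => trivial)]
    rw [← intervalIntegral.integral_smul, ← intervalIntegral.integral_smul,
      ← intervalIntegral.integral_smul, ← intervalIntegral.integral_add, ← intervalIntegral.integral_add]
    · apply intervalIntegral.integral_congr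
      intro θ _
      simp only [hQ, smul_eq_mul]
      ring
    · exact i1.add i2
    · exact i3
    · exact i1
    · exact i2
  -- put everything together
  calc (∫ φ in (0:ℝ)..2*π,
        Real.log (1 + r^2 - 2*r*Real.cos φ) * Real.sin φ ^ 2 / (1 + r^2 - 2*r*Real.cos φ))
      = ∫ θ in (0:ℝ)..2*π, 2 * ((circleMap 0 1 θ * Complex.I) • Q (circleMap 0 1 θ)).im :=
        intervalIntegral.integral_congr (fun θ _ => key θ)
    _ = 2 * ∫ θ in (0:ℝ)..2*π, ((circleMap 0 1 θ * Complex.I) • Q (circleMap 0 1 θ)).im := by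
        rw [intervalIntegral.integral_const_mul]
    _ = 2 * (∫ θ in (0:ℝ)..2*π, (circleMap 0 1 θ * Complex.I) • Q (circleMap 0 1 θ)).im := by
        congr 1
        have h := Complex.imCLM.intervalIntegral_comp_comm (a := 0) (b := 2*π) hGint
        simpa using h
    _ = -π - π*(1-r^2)*Real.log (1-r^2)/r^2 := by
        rw [hsplit, hc1, hc2, hc3, hN0, hds0, hNr]
        have hval : (-(1/(r:ℂ)^2)) • ((2 * ↑π * Complex.I : ℂ) • (0:ℂ))
            + (-(1/(r:ℂ))) • ((2 * ↑π * Complex.I : ℂ) • ((r:ℂ)/4))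
            + ((1/(r:ℂ)^2)) • ((2 * ↑π * Complex.I : ℂ) • ((-(Real.log (1-r^2) * (1-r^2))/4 : ℝ) : ℂ))
            = Complex.I * ((2*π*(-(1:ℝ)/4 - (1-r^2)*Real.log (1-r^2)/(4*r^2)) : ℝ) : ℂ) := by
          push_cast
          field_simp
          linear_combination (2*(π:ℂ)*Complex.I*(((r:ℂ)^2-1)*((Real.log (1-r^2) : ℝ) : ℂ)*((r:ℂ)*(r:ℂ)⁻¹+1) - (r:ℂ)^2)) * mul_inv_cancel₀ hrne
        rw [hval]
        rw [show (Complex.I * ((2*π*(-(1:ℝ)/4 - (1-r^2)*Real.log (1-r^2)/(4*r^2)) : ℝ) : ℂ)).im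
            = 2*π*(-(1:ℝ)/4 - (1-r^2)*Real.log (1-r^2)/(4*r^2)) by
              rw [mul_comm, Complex.mul_I_im, Complex.ofReal_re]]
        field_simp
        ring

/-- The logarithmic moment of the Marčenko–Pastur distribution: for `c ∈ (0,1)`,
with `a(c) = (1−√c)²` and `b(c) = (1+√c)²`,
`∫_{a(c)}^{b(c)} (log x)/(2πx) √((x−a(c))(b(c)−x)) dx = (c−1) log(1−c) − c`. -/
theorem marcenkoPastur_log_moment (c : ℝ) (hc : c ∈ Set.Ioo (0:ℝ) 1) :
    ∫ x in ((1 - Real.sqrt c) ^ 2)..((1 + Real.sqrt c) ^ 2),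
        log x / (2 * π * x) *
          Real.sqrt ((x - (1 - Real.sqrt c) ^ 2) * ((1 + Real.sqrt c) ^ 2 - x))
      = (c - 1) * log (1 - c) - c := by
  obtain ⟨hc0, hc1⟩ := hc
  set r := Real.sqrt c with hrdef
  have hr0 : 0 < r := Real.sqrt_pos.mpr hc0
  have hrc : r^2 = c := Real.sq_sqrt hc0.le
  have hr1 : r < 1 := by nlinarith
  rw [← hrc]
  set f : ℝ → ℝ := fun φ => 1 + r^2 - 2*r*Real.cos φ with hf
  set g : ℝ → ℝ := fun x => log x / (2 * π * x) *
      Real.sqrt ((x - (1 - r) ^ 2) * ((1 + r) ^ 2 - x)) with hg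
  set H : ℝ → ℝ := fun φ => Real.log (1 + r^2 - 2*r*Real.cos φ) * Real.sin φ ^ 2
      / (1 + r^2 - 2*r*Real.cos φ) with hH
  have hfpos : ∀ φ : ℝ, 0 < f φ := by
    intro φ
    have := Real.cos_le_one φ
    have := Real.neg_one_le_cos φ
    simp only [hf]
    nlinarith
  -- continuity of H
  have hHcont : Continuous H := by
    rw [continuous_iff_continuousAt]
    intro φ
    have h1 : (0:ℝ) < 1 + r^2 - 2*r*Real.cos φ := hfpos φ
    have hin : ContinuousAt (fun φ : ℝ => 1 + r^2 - 2*r*Real.cos φ) φ := by fun_prop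
    exact ((hin.log h1.ne').mul (by fun_prop)).div hin h1.ne'
  -- change of variables
  have hf0 : f 0 = (1 - r)^2 := by simp [hf]; ring
  have hfπ : f π = (1 + r)^2 := by simp [hf, Real.cos_pi]; ring
  have hcv : ∫ φ in (0:ℝ)..π, (2*r*Real.sin φ) • (g ∘ f) φ = ∫ x in ((1-r)^2)..((1+r)^2), g x := by
    rw [← hf0, ← hfπ]
    apply intervalIntegral.integral_comp_smul_deriv'' (f := f) (f' := fun φ => 2*r*Real.sin φ)
    · fun_prop
    · intro φ _
      have : HasDerivAt f (2*r*Real.sin φ) φ := by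
        have h := ((Real.hasDerivAt_cos φ).const_mul (2*r)).const_sub (1+r^2)
        refine h.congr_deriv ?_
        ring
      exact this.hasDerivWithinAt
    · fun_prop
    · have himg : f '' (Set.uIcc 0 π) ⊆ Set.Ioi (0:ℝ) := by
        rintro _ ⟨φ, _, rfl⟩
        exact hfpos φ
      refine ContinuousOn.mono ?_ himg
      apply ContinuousOn.mul
      · apply ContinuousOn.div
        · exact Real.continuousOn_log.mono (fun x hx => ne_of_gt hx)
        · fun_prop
        · intro x hx
          have : (0:ℝ) < x := hx
          positivity
      · exact (Real.continuous_sqrt.comp (by fun_prop)).continuousOn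
  -- pointwise identification with H
  have hpt : ∀ φ ∈ Set.uIcc (0:ℝ) π, (2*r*Real.sin φ) • (g ∘ f) φ = (2*r^2/π) * H φ := by
    intro φ hφ
    simp only [Function.comp]
    rw [Set.uIcc_of_le Real.pi_pos.le] at hφ
    have hsin : 0 ≤ Real.sin φ := Real.sin_nonneg_of_nonneg_of_le_pi hφ.1 hφ.2
    have hfp := hfpos φ
    have pyth := Real.sin_sq_add_cos_sq φ
    have hsq : (f φ - (1-r)^2)*((1+r)^2 - f φ) = (2*r*Real.sin φ)^2 := by
      simp only [hf]
      linear_combination (-(4*r^2))*pyth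
    have hsqrt : Real.sqrt ((f φ - (1-r)^2)*((1+r)^2 - f φ)) = 2*r*Real.sin φ := by
      rw [hsq, Real.sqrt_sq (by positivity)]
    simp only [hg, hH, smul_eq_mul]
    rw [hsqrt]
    simp only [hf] at hfp ⊢
    field_simp
  -- doubling
  have hsym : ∫ φ in π..2*π, H φ = ∫ φ in (0:ℝ)..π, H φ := by
    have h := intervalIntegral.integral_comp_sub_left (a := (0:ℝ)) (b := π) H (2*π)
    rw [show 2*π - π = π by ring, sub_zero] at h
    rw [← h]
    apply intervalIntegral.integral_congr
    intro φ _
    simp only [hH]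
    rw [Real.cos_sub, Real.sin_sub, Real.cos_two_pi, Real.sin_two_pi]
    ring_nf
  have hdouble : ∫ φ in (0:ℝ)..2*π, H φ = 2 * ∫ φ in (0:ℝ)..π, H φ := by
    rw [← intervalIntegral.integral_add_adjacent_intervals
      (hHcont.intervalIntegrable 0 π) (hHcont.intervalIntegrable π (2*π)), hsym]
    ring
  -- put it together
  have hval := mp_circle_integral r hr0 hr1
  have hπ : (π:ℝ) ≠ 0 := Real.pi_ne_zero
  have hfin : ∫ x in ((1-r)^2)..((1+r)^2), g x = (r^2-1) * log (1-r^2) - r^2 := by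
    rw [← hcv, intervalIntegral.integral_congr hpt, intervalIntegral.integral_const_mul]
    have h2 : ∫ φ in (0:ℝ)..π, H φ = (-π - π*(1-r^2)*Real.log (1-r^2)/r^2)/2 := by
      rw [← hval, hdouble]; ring
    rw [h2]
    field_simp
    ring
  exact hfin
end

section
/- For every integer k ≥ 2, ∑_{i=1}^{k−1} Ψ(i/2) = ((k−2)/2)Ψ(k/2) − k + ((k−1)/2)Ψ((k+1)/2) + (2 − γ − 2 log 2)/2, where γ is the Euler–Mascheroni constant. -/
open Real Finset

/-- The digamma function `Ψ = Γ'/Γ`, as the derivative of `log ∘ Γ`. -/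
noncomputable def digamma (x : ℝ) : ℝ := deriv (fun y => log (Gamma y)) x

lemma hasDerivAt_logGamma {x : ℝ} (hx : 0 < x) :
    HasDerivAt (fun y => log (Gamma y)) (deriv Gamma x / Gamma x) x := by
  have hd : DifferentiableAt ℝ Gamma x :=
    Real.differentiableAt_Gamma (fun n => ne_of_gt (by have := n.cast_nonneg (α := ℝ); linarith))
  exact hd.hasDerivAt.log (Real.Gamma_pos_of_pos hx).ne'

lemma digamma_eq {x : ℝ} (hx : 0 < x) : digamma x = deriv Gamma x / Gamma x :=
  (hasDerivAt_logGamma hx).deriv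

lemma hasDerivAt_logGamma' {x : ℝ} (hx : 0 < x) :
    HasDerivAt (fun y => log (Gamma y)) (digamma x) x := by
  rw [digamma_eq hx]; exact hasDerivAt_logGamma hx

lemma digamma_one_half : digamma (1 / 2) = -Real.eulerMascheroniConstant - 2 * log 2 := by
  rw [digamma_eq (by norm_num : (0:ℝ) < 1/2), Real.hasDerivAt_Gamma_one_half.deriv,
    Real.Gamma_one_half_eq]
  have h : (0:ℝ) < √π := Real.sqrt_pos.mpr Real.pi_pos
  field_simp
  ring

lemma digamma_add_one {x : ℝ} (hx : 0 < x) : digamma (x + 1) = digamma x + 1 / x := by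
  have h1 : HasDerivAt (fun y : ℝ => log (y - 1)) (1 / x) (x + 1) := by
    have := ((hasDerivAt_id (x + 1)).sub_const 1).log (by simpa using hx.ne')
    simpa using this
  have h2 : HasDerivAt (fun y : ℝ => log (Gamma (y - 1))) (digamma x) (x + 1) := by
    have hsub : HasDerivAt (fun y : ℝ => y - 1) 1 (x + 1) :=
      (hasDerivAt_id (x + 1)).sub_const 1
    have := (hasDerivAt_logGamma' (x := (x + 1) - 1) (by simpa using hx)).comp (x + 1) hsub
    simpa [Function.comp_def] using this
  have heq : (fun y : ℝ => log (y - 1) + log (Gamma (y - 1)))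
      =ᶠ[nhds (x + 1)] fun y => log (Gamma y) := by
    have hmem : Set.Ioi (1:ℝ) ∈ nhds (x + 1) :=
      Ioi_mem_nhds (by linarith)
    filter_upwards [hmem] with y hy
    have hy1 : 0 < y - 1 := by simpa using hy
    rw [← Real.log_mul hy1.ne' (Real.Gamma_pos_of_pos hy1).ne',
      ← Real.Gamma_add_one hy1.ne']
    norm_num
  have := ((h1.add h2).congr_of_eventuallyEq heq.symm).deriv
  rw [digamma, this]; ring

/-- For `k ≥ 2`,
`∑_{i=1}^{k−1} Ψ(i/2) = ((k−2)/2)Ψ(k/2) − k + ((k−1)/2)Ψ((k+1)/2) + (2 − γ − 2 log 2)/2`. -/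
theorem sum_digamma_halves (k : ℕ) (hk : 2 ≤ k) :
    ∑ i ∈ Finset.Icc 1 (k - 1), digamma (i / 2)
      = ((k : ℝ) - 2) / 2 * digamma (k / 2) - k
        + ((k : ℝ) - 1) / 2 * digamma ((k + 1) / 2)
        + (2 - Real.eulerMascheroniConstant - 2 * log 2) / 2 := by
  induction k, hk using Nat.le_induction with
  | base =>
    have h32 : digamma ((2 + 1) / 2 : ℝ) = digamma (1 / 2) + 2 := by
      have := digamma_add_one (x := (1:ℝ)/2) (by norm_num)
      norm_num at this ⊢
      linarith
    simp only [show (2:ℕ) - 1 = 1 from rfl, Finset.Icc_self, Finset.sum_singleton]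
    push_cast
    rw [h32, digamma_one_half]
    ring
  | succ k hk ih =>
    have hk0 : (0:ℝ) < k := by positivity
    have hrec : digamma (((k:ℝ) + 1 + 1) / 2) = digamma ((k:ℝ) / 2) + 2 / k := by
      have := digamma_add_one (x := (k:ℝ)/2) (by positivity)
      have e : (k:ℝ)/2 + 1 = ((k:ℝ) + 1 + 1) / 2 := by ring
      rw [e] at this
      rw [this]
      field_simp
    have hsum : ∑ i ∈ Finset.Icc 1 (k + 1 - 1), digamma ((i:ℝ) / 2)
        = (∑ i ∈ Finset.Icc 1 (k - 1), digamma ((i:ℝ) / 2)) + digamma ((k:ℝ) / 2) := by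
      have : k + 1 - 1 = (k - 1) + 1 := by omega
      rw [this, Finset.sum_Icc_succ_top (by omega)]
      congr 2
      push_cast [Nat.sub_add_cancel (by omega : 1 ≤ k)]
      ring
    rw [hsum, ih]
    push_cast
    rw [hrec]
    field_simp
    ring
end

section
/- For every x > 0, 0 < x(log x − Ψ(x)) ≤ 1, where Ψ is the digamma function. -/
open Real Set

/-- For every `x > 0`, `0 < x (log x − Ψ(x)) ≤ 1`. -/
theorem digamma_log_bound (x : ℝ) (hx : 0 < x) :
    0 < x * (log x - digamma x) ∧ x * (log x - digamma x) ≤ 1 := by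
  set f : ℝ → ℝ := fun y => log (Gamma y) with hf
  have hc : ConvexOn ℝ (Ioi 0) f := Real.convexOn_log_Gamma
  have h_rec : ∀ y : ℝ, 0 < y → f (y + 1) = f y + log y := fun y hy => by
    simp only [hf, Real.Gamma_add_one hy.ne',
      Real.log_mul hy.ne' (Real.Gamma_pos_of_pos hy).ne', add_comm]
  have hder : ∀ {y : ℝ}, 0 < y → DifferentiableAt ℝ f y := fun {y} hy => by
    refine ((Real.differentiableAt_Gamma ?_).log (Real.Gamma_ne_zero ?_)) <;>
      exact fun m => ne_of_gt (by have : (0:ℝ) ≤ (m:ℝ) := Nat.cast_nonneg m; linarith)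
  -- recurrence for the derivative
  have hder_rec : deriv f (x + 1) = deriv f x + 1 / x := by
    rw [← deriv_comp_add_const, one_div, ← Real.deriv_log,
      ← deriv_add (hder hx) (Real.differentiableAt_log hx.ne')]
    apply Filter.EventuallyEq.deriv_eq
    filter_upwards [eventually_gt_nhds hx] using h_rec
  -- slope bounds from convexity
  have hslope1 : log x ≤ deriv f (x + 1) := by
    refine (le_of_eq ?_).trans <| hc.slope_le_deriv (mem_Ioi.mpr hx)
      (mem_Ioi.mpr (by linarith)) (by linarith) (hder (by linarith))
    rw [slope_def_field, show x + 1 - x = (1 : ℝ) by ring, div_one, h_rec x hx,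
      add_sub_cancel_left]
  have hslope2 : deriv f (x + 1) ≤ log (x + 1) := by
    refine (hc.deriv_le_slope (mem_Ioi.mpr (by linarith : (0:ℝ) < x + 1))
      (mem_Ioi.mpr (by linarith : (0:ℝ) < x + 1 + 1)) (by linarith)
      (hder (by linarith))).trans (le_of_eq ?_)
    rw [slope_def_field, show x + 1 + 1 - (x + 1) = (1 : ℝ) by ring, div_one,
      h_rec (x + 1) (by linarith), add_sub_cancel_left]
  have hdig : digamma x = deriv f (x + 1) - 1 / x := by
    rw [digamma, ← hf, hder_rec]; ring
  -- strict upper bound: `log (x+1) - 1/x < log x`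
  have hlog : log (x + 1) - 1 / x < log x := by
    have h1 : log (x + 1) - log x = log ((x + 1) / x) := by
      rw [Real.log_div (by linarith) hx.ne']
    have h2 : log ((x + 1) / x) < (x + 1) / x - 1 :=
      Real.log_lt_sub_one_of_pos (by positivity) (by
        intro h
        rw [div_eq_one_iff_eq hx.ne'] at h
        linarith)
    have h3 : (x + 1) / x - 1 = 1 / x := by field_simp; ring
    linarith
  constructor
  · have : digamma x < log x := by
      rw [hdig]; linarith
    nlinarith
  · have : log x - 1 / x ≤ digamma x := by rw [hdig]; linarith
    have hx' : x * (1 / x) = 1 := by field_simp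
    nlinarith
end

section
/- The function f(s) = (1/2 − 1/s + 1/(eˢ−1))/s, extended by f(0) = 1/12, satisfies 0 < f(s) ≤ 1/12 and 0 < s f(s) + 1/2 < 1 for all s ≥ 0. -/
open Real

/-- The Binet function `f(s) = (1/2 − 1/s + 1/(eˢ−1))/s` for `s > 0`,
extended continuously by `f(0) = 1/12`. -/
noncomputable def binetF (s : ℝ) : ℝ :=
  if s = 0 then 1 / 12 else (1 / 2 - 1 / s + 1 / (exp s - 1)) / s

-- `(s-1)e^s + 1 > 0` for `s > 0`
lemma binetF_aux1 (s : ℝ) (hs : 0 < s) : 0 < (s - 1) * exp s + 1 := by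
  have key : StrictMonoOn (fun x : ℝ => (x - 1) * exp x + 1) (Set.Ici 0) := by
    apply strictMonoOn_of_deriv_pos (convex_Ici 0)
    · fun_prop
    · intro x hx
      rw [interior_Ici] at hx
      have hd : HasDerivAt (fun x : ℝ => (x - 1) * exp x + 1) (x * exp x) x := by
        have := (((hasDerivAt_id x).sub_const 1).mul (Real.hasDerivAt_exp x)).add_const 1
        refine this.congr_deriv ?_
        simp only [id_eq]
        ring
      rw [hd.deriv]
      have hx' : (0:ℝ) < x := hx
      have := exp_pos x
      positivity
  have := key (Set.self_mem_Ici) (Set.mem_Ici.mpr hs.le) hs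
  simpa using this

-- `(s-2)e^s + s + 2 > 0` for `s > 0`
lemma binetF_aux2 (s : ℝ) (hs : 0 < s) : 0 < (s - 2) * exp s + s + 2 := by
  have key : StrictMonoOn (fun x : ℝ => (x - 2) * exp x + x + 2) (Set.Ici 0) := by
    apply strictMonoOn_of_deriv_pos (convex_Ici 0)
    · fun_prop
    · intro x hx
      rw [interior_Ici] at hx
      have hd : HasDerivAt (fun x : ℝ => (x - 2) * exp x + x + 2)
          ((x - 1) * exp x + 1) x := by
        have := ((((hasDerivAt_id x).sub_const 2).mul (Real.hasDerivAt_exp x)).add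
          (hasDerivAt_id x)).add_const 2
        refine this.congr_deriv ?_
        simp only [id_eq]
        ring
      rw [hd.deriv]
      exact binetF_aux1 x hx
  have := key (Set.self_mem_Ici) (Set.mem_Ici.mpr hs.le) hs
  simpa using this

-- `(s² - 6s + 12)e^s ≥ s² + 6s + 12` for `s ≥ 0`
lemma binetF_aux3 (s : ℝ) (hs : 0 ≤ s) :
    s ^ 2 + 6 * s + 12 ≤ (s ^ 2 - 6 * s + 12) * exp s := by
  have h := Real.sum_le_exp_of_nonneg hs 7
  have hsum : ∑ i ∈ Finset.range 7, s ^ i / (i.factorial : ℝ) =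
      1 + s + s ^ 2 / 2 + s ^ 3 / 6 + s ^ 4 / 24 + s ^ 5 / 120 + s ^ 6 / 720 := by
    simp [Finset.sum_range_succ, Nat.factorial]
  rw [hsum] at h
  nlinarith [sq_nonneg s, sq_nonneg (s - 3),
    mul_nonneg (mul_nonneg (mul_nonneg hs hs) hs) hs, pow_nonneg hs 5, pow_nonneg hs 6,
    pow_nonneg hs 8]

/-- For all `s ≥ 0`, `0 < f(s) ≤ 1/12` and `0 < s f(s) + 1/2 < 1`. -/
theorem binetF_bounds (s : ℝ) (hs : 0 ≤ s) :
    (0 < binetF s ∧ binetF s ≤ 1 / 12) ∧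
      (0 < s * binetF s + 1 / 2 ∧ s * binetF s + 1 / 2 < 1) := by
  rcases eq_or_lt_of_le hs with h0 | h0
  · subst h0
    norm_num [binetF]
  · have hne : s ≠ 0 := ne_of_gt h0
    have hE : s + 1 < exp s := by
      have := Real.add_one_lt_exp hne
      linarith
    have hE1 : 0 < exp s - 1 := by linarith
    have hval : binetF s = (1 / 2 - 1 / s + 1 / (exp s - 1)) / s := by
      simp [binetF, hne]
    have hrw : (1 / 2 - 1 / s + 1 / (exp s - 1)) =
        ((s - 2) * exp s + s + 2) / (2 * s * (exp s - 1)) := by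
      field_simp
      ring
    have hden : 0 < 2 * s * (exp s - 1) := by positivity
    have hnum := binetF_aux2 s h0
    have hfpos : 0 < binetF s := by
      rw [hval, hrw]
      positivity
    have hf12 : binetF s ≤ 1 / 12 := by
      rw [hval, hrw, div_div, div_le_div_iff₀ (by positivity) (by norm_num)]
      have := binetF_aux3 s h0.le
      nlinarith
    have hsf : s * binetF s = 1 / 2 - 1 / s + 1 / (exp s - 1) := by
      rw [hval]
      field_simp
    refine ⟨⟨hfpos, hf12⟩, ?_, ?_⟩
    · have : 0 < s * binetF s := mul_pos h0 hfpos
      linarith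
    · rw [hsf]
      have hlt : 1 / (exp s - 1) < 1 / s := by
        apply one_div_lt_one_div_of_lt h0
        linarith
      linarith
end

section
/- For s > 0, the function f(s) = (1/2 − 1/s + 1/(eˢ−1))/s admits the expansion f(s) = 2 ∑_{k=1}^∞ 1/(s² + 4π²k²). -/
open Real

open Set MeasureTheory intervalIntegral

instance : Fact ((0:ℝ) < 1) := ⟨one_pos⟩

noncomputable def binetG (s : ℝ) : AddCircle (1:ℝ) → ℂ :=
  AddCircle.liftIoc 1 0 (fun x : ℝ => Complex.exp ((s : ℂ) * x))

lemma binetG_coeff (s : ℝ) (hs : 0 < s) (n : ℤ) :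
    fourierCoeff (binetG s) n = (Complex.exp s - 1) / (s - 2 * π * Complex.I * n) := by
  have hc : (s : ℂ) - 2 * π * Complex.I * n ≠ 0 := by
    intro h
    have := congrArg Complex.re h
    simp [Complex.sub_re, Complex.mul_re] at this
    nlinarith [hs]
  rw [fourierCoeff_eq_intervalIntegral (binetG s) n 0]
  have h1 : ∀ x ∈ Ioc (0:ℝ) (0+1), (fourier (-n) (x : AddCircle (1:ℝ)) : ℂ) • binetG s x
      = Complex.exp (((s : ℂ) - 2 * π * Complex.I * n) * x) := by
    intro x hx
    rw [binetG, AddCircle.liftIoc_coe_apply hx, fourier_coe_apply, smul_eq_mul,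
      ← Complex.exp_add]
    congr 1
    push_cast
    ring
  have key : (∫ x in (0:ℝ)..0+1, (fourier (-n) (x : AddCircle (1:ℝ)) : ℂ) • binetG s x)
      = ∫ x in (0:ℝ)..0+1, Complex.exp (((s : ℂ) - 2 * π * Complex.I * n) * x) := by
    refine intervalIntegral.integral_congr_ae (MeasureTheory.ae_of_all _ fun x hx => ?_)
    exact h1 x (by simpa [uIoc_of_le (by norm_num : (0:ℝ) ≤ 0+1)] using hx)
  refine Eq.trans (congrArg _ key) ?_
  rw [integral_exp_mul_complex hc]
  have h2 : Complex.exp (((s : ℂ) - 2 * π * Complex.I * n) * (((0:ℝ)+1 : ℝ) : ℂ)) = Complex.exp s := by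
    rw [show ((((0:ℝ)+1 : ℝ)) : ℂ) = 1 by norm_num, mul_one, sub_eq_add_neg, Complex.exp_add]
    have : Complex.exp (-(2 * π * Complex.I * n)) = 1 := by
      rw [← Complex.exp_int_mul_two_pi_mul_I (-n)]
      congr 1
      push_cast
      ring
    rw [this, mul_one]
  rw [h2]
  norm_num

lemma binetG_coeff_normsq (s : ℝ) (hs : 0 < s) (n : ℤ) :
    ‖fourierCoeff (binetG s) n‖ ^ 2
      = (Real.exp s - 1) ^ 2 / (s ^ 2 + 4 * π ^ 2 * (n : ℝ) ^ 2) := by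
  rw [binetG_coeff s hs n, norm_div, div_pow]
  congr 1
  · rw [← Complex.ofReal_exp, ← Complex.ofReal_one, ← Complex.ofReal_sub, Complex.norm_real]
    rw [Real.norm_eq_abs, sq_abs]
  · rw [Complex.sq_norm, Complex.normSq_apply]
    simp [Complex.sub_re, Complex.sub_im, Complex.mul_re, Complex.mul_im]
    ring

lemma binetG_memL2 (s : ℝ) (hs : 0 < s) :
    MemLp (binetG s) 2 (AddCircle.haarAddCircle (T := 1)) := by
  have hm : Measurable (binetG s) := by
    show Measurable fun z : AddCircle (1:ℝ) =>
      Complex.exp ((s:ℂ) * ((AddCircle.equivIoc 1 0 z : ℝ) : ℂ))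
    have h1 : Measurable fun z : AddCircle (1:ℝ) => ((AddCircle.equivIoc 1 0 z : ℝ)) :=
      measurable_subtype_coe.comp (AddCircle.measurableEquivIoc 1 0).measurable
    exact Complex.measurable_exp.comp
      (measurable_const.mul (Complex.measurable_ofReal.comp h1))
  refine MemLp.of_bound hm.aestronglyMeasurable (Real.exp s) (ae_of_all _ fun z => ?_)
  obtain ⟨x, hx⟩ := (AddCircle.equivIoc 1 0).symm.surjective z
  have hx2 : (x : ℝ) ∈ Ioc (0:ℝ) (0+1) := x.2
  have : binetG s z = Complex.exp ((s:ℂ) * (x : ℝ)) := by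
    rw [← hx]
    show binetG s ((x : ℝ) : AddCircle (1:ℝ)) = _
    rw [binetG, AddCircle.liftIoc_coe_apply hx2]
  rw [this, Complex.norm_exp]
  have : ((s:ℂ) * (x:ℝ)).re = s * x := by simp
  rw [this]
  exact Real.exp_le_exp.2 (by nlinarith [hx2.1, hx2.2, hs])

lemma binetG_sq_integral (s : ℝ) (hs : 0 < s) :
    ∫ t : AddCircle (1:ℝ), ‖binetG s t‖ ^ 2 ∂(AddCircle.haarAddCircle)
      = (Real.exp (2*s) - 1) / (2*s) := by
  have hvol : (AddCircle.haarAddCircle : Measure (AddCircle (1:ℝ))) = volume := by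
    rw [AddCircle.volume_eq_smul_haarAddCircle]
    simp
  rw [hvol, ← AddCircle.integral_preimage 1 0 (fun t => ‖binetG s t‖ ^ 2)]
  have h1 : ∀ x ∈ Ioc (0:ℝ) (0+1), ‖binetG s (x : AddCircle (1:ℝ))‖ ^ 2 = Real.exp (2*s*x) := by
    intro x hx
    rw [binetG, AddCircle.liftIoc_coe_apply hx, Complex.norm_exp]
    have : ((s:ℂ) * (x:ℝ)).re = s * x := by simp
    rw [this, sq, ← Real.exp_add]
    ring_nf
  rw [setIntegral_congr_fun measurableSet_Ioc h1]
  have h2 : (∫ x in Ioc (0:ℝ) (0+1), Real.exp (2*s*x)) = ∫ x in (0:ℝ)..1, Real.exp (2*s*x) := by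
    rw [intervalIntegral.integral_of_le (by norm_num : (0:ℝ) ≤ 1)]
    norm_num
  rw [h2]
  have h3 : (∫ x in (0:ℝ)..1, Real.exp (2*s*x)) = ∫ x in (0:ℝ)..1, Real.exp ((2*s) * x) := by
    congr 1
  rw [h3, integral_comp_mul_left Real.exp (by positivity : (2:ℝ)*s ≠ 0)]
  rw [integral_exp, smul_eq_mul, mul_one, mul_zero, Real.exp_zero]
  rw [inv_mul_eq_div]

lemma binet_summand_summable (s : ℝ) (hs : 0 < s) :
    Summable (fun k : ℕ => 1 / (s^2 + 4*π^2*((k:ℝ)+1)^2)) := by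
  have base : Summable (fun n : ℕ => 1 / ((n:ℝ))^2) :=
    Real.summable_one_div_nat_pow.2 one_lt_two
  have shifted : Summable (fun n : ℕ => 1 / (((n:ℝ)+1))^2) := by
    have := (summable_nat_add_iff 1).2 base
    refine this.congr fun n => ?_
    push_cast
    ring
  refine Summable.of_nonneg_of_le (fun k => by positivity) (fun k => ?_)
    (shifted.mul_left (1/(4*π^2)))
  have hπ := Real.pi_pos
  rw [div_mul_div_comm, one_mul]
  refine one_div_le_one_div_of_le (by positivity) ?_
  nlinarith [sq_nonneg s, sq_nonneg ((k:ℝ)+1), sq_nonneg π]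

lemma binet_parseval (s : ℝ) (hs : 0 < s) :
    ∑' n : ℤ, (Real.exp s - 1)^2 / (s^2 + 4*π^2*(n:ℝ)^2)
      = (Real.exp (2*s) - 1) / (2*s) := by
  have hmem := binetG_memL2 s hs
  have hP := tsum_sq_fourierCoeff (hmem.toLp (binetG s))
  have hcoe : ∀ n : ℤ,
      fourierCoeff ((hmem.toLp (binetG s) : Lp ℂ 2 _) : AddCircle (1:ℝ) → ℂ) n
        = fourierCoeff (binetG s) n := by
    intro n
    unfold fourierCoeff
    exact integral_congr_ae ((hmem.coeFn_toLp).mono fun x hx => by dsimp only; rw [hx])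
  have hint : (∫ t : AddCircle (1:ℝ), ‖(hmem.toLp (binetG s) : Lp ℂ 2 _) t‖^2
        ∂AddCircle.haarAddCircle)
      = ∫ t : AddCircle (1:ℝ), ‖binetG s t‖^2 ∂AddCircle.haarAddCircle :=
    integral_congr_ae ((hmem.coeFn_toLp).mono fun x hx => by dsimp only; rw [hx])
  rw [hint, binetG_sq_integral s hs] at hP
  rw [← hP]
  congr 1
  funext n
  rw [hcoe n, binetG_coeff_normsq s hs n]

/-- For `s > 0`,
`(1/2 − 1/s + 1/(eˢ−1))/s = 2 ∑_{k=1}^∞ 1/(s² + 4π²k²)`. -/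
theorem binetF_series (s : ℝ) (hs : 0 < s) :
    (1 / 2 - 1 / s + 1 / (exp s - 1)) / s
      = 2 * ∑' k : ℕ, 1 / (s ^ 2 + 4 * π ^ 2 * ((k : ℝ) + 1) ^ 2) := by
  set E : ℝ := Real.exp s - 1 with hE
  have hEpos : 0 < E := by
    have := Real.add_one_le_exp s
    have h1 : 1 < Real.exp s := by nlinarith [Real.exp_pos s] -- maybe
    linarith
  set S : ℝ := ∑' k : ℕ, 1 / (s ^ 2 + 4 * π ^ 2 * ((k : ℝ) + 1) ^ 2) with hS
  have hπ := Real.pi_pos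
  -- summability facts
  have hsum1 : Summable (fun k : ℕ => E^2 / (s^2 + 4*π^2*((k:ℝ)+1)^2)) := by
    have := (binet_summand_summable s hs).mul_left (E^2)
    refine this.congr fun k => ?_
    rw [mul_one_div]
  have hsum0 : Summable (fun n : ℕ => E^2 / (s^2 + 4*π^2*((n:ℝ))^2)) := by
    refine (summable_nat_add_iff 1).1 ?_
    refine hsum1.congr fun k => ?_
    push_cast
    ring_nf
  have hsumneg : Summable (fun n : ℕ => E^2 / (s^2 + 4*π^2*((-(n+1) : ℤ):ℝ)^2)) := by
    refine hsum1.congr fun k => ?_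
    push_cast
    ring_nf
  -- Parseval rearranged
  have hsplit : (∑' n : ℤ, E^2 / (s^2 + 4*π^2*(n:ℝ)^2))
      = E^2/s^2 + 2 * (E^2 * S) := by
    rw [tsum_of_nat_of_neg_add_one
      (by exact_mod_cast hsum0) (by exact_mod_cast hsumneg)]
    have e1 : (∑' n : ℕ, E^2 / (s^2 + 4*π^2*(((n:ℤ)):ℝ)^2))
        = E^2/s^2 + ∑' n : ℕ, E^2 / (s^2 + 4*π^2*((n:ℝ)+1)^2) := by
      rw [Summable.tsum_eq_zero_add (by exact_mod_cast hsum0)]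
      push_cast
      norm_num
    have e2 : (∑' n : ℕ, E^2 / (s^2 + 4*π^2*(((-(n+1):ℤ)):ℝ)^2))
        = ∑' n : ℕ, E^2 / (s^2 + 4*π^2*((n:ℝ)+1)^2) := by
      congr 1
      funext n
      push_cast
      ring_nf
    have e3 : (∑' n : ℕ, E^2 / (s^2 + 4*π^2*((n:ℝ)+1)^2)) = E^2 * S := by
      rw [hS, ← tsum_mul_left]
      congr 1
      funext n
      rw [mul_one_div]
    rw [e1, e2, e3]
    ring
  have hpar := binet_parseval s hs
  rw [hsplit] at hpar
  -- final algebra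
  have hs' : s ≠ 0 := ne_of_gt hs
  have hE' : E ≠ 0 := ne_of_gt hEpos
  have hexp2 : Real.exp (2*s) = (E+1)^2 := by
    rw [hE]
    rw [two_mul, Real.exp_add]
    ring_nf
  rw [hexp2] at hpar
  have hexp : Real.exp s = E + 1 := by rw [hE]; ring
  have h2s : (2:ℝ)*s ≠ 0 := by positivity
  field_simp at hpar ⊢
  have hse : (s*E : ℝ) ≠ 0 := by positivity
  refine mul_left_cancel₀ hse ?_
  linear_combination (-s) * hpar
end
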